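/- Let d ≥ 2 and let θ_1, …, θ_d be real numbers with Σ_{k=1}^d θ_k = 0 and (1/d)·Σ_{k=1}^d θ_k² = σ². For each positive integer m set p_m(x) := ∏_{k=1}^d (x − e^{θ_k/√m}). Then for every k ∈ {0,1,…,d}, lim_{m→∞} ã_k(p_m)^m = exp(k(d−k)σ²/(2(d−1))); equivalently, the polynomials p_m^{⊠_d m} converge coefficientwise to I_d(x; dσ²/(d−1)) as m → ∞, where I_d(x;t) := Σ_{k=0}^d (−1)^k · C(d,k) · exp(k(d−k)t/(2d)) · x^{d−k} for t ≥ 0. -/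

import Mathlib

open Finset Filter

/-- For `p(x) = Σ_{i=0}^d a_i x^{d-i}`, `atilde d p i = (-1)^i * (d.choose i)⁻¹ * a_i`. -/
noncomputable def atilde (d : ℕ) (p : Polynomial ℂ) (i : ℕ) : ℂ :=
  (-1) ^ i * ((d.choose i : ℂ))⁻¹ * p.coeff (d - i)

/-- Finite free multiplicative convolution of degree-`d` polynomials. -/
noncomputable def ffmul (d : ℕ) (p q : Polynomial ℂ) : Polynomial ℂ :=
  ∑ i ∈ Finset.range (d + 1),
    Polynomial.C ((-1) ^ i * (d.choose i : ℂ) * atilde d p i * atilde d q i) *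
      Polynomial.X ^ (d - i)

/-- The `m`-fold finite free multiplicative convolution power `p^{⊠_d m}`;
the empty convolution is the identity `(x-1)^d` for `⊠_d`. -/
noncomputable def ffpow (d : ℕ) (p : Polynomial ℂ) : ℕ → Polynomial ℂ
  | 0 => (Polynomial.X - 1) ^ d
  | m + 1 => ffmul d (ffpow d p m) p

/-- The limit polynomial `I_d(x;t)` of the finite free multiplicative CLT. -/
noncomputable def Idpoly (d : ℕ) (t : ℝ) : Polynomial ℂ :=
  ∑ k ∈ Finset.range (d + 1),
    Polynomial.C ((-1) ^ k * (d.choose k : ℂ) *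
        ((Real.exp ((k : ℝ) * ((d : ℝ) - (k : ℝ)) * t / (2 * (d : ℝ)))) : ℂ)) *
      Polynomial.X ^ (d - k)

section AuxLemmas
open Topology

/-- counting subsets of given size containing a fixed subset -/
lemma card_filter_subset_powersetCard {α : Type*} [DecidableEq α] (u t : Finset α)
    (ht : t ⊆ u) (k : ℕ) :
    (((u.powersetCard (k + t.card)).filter (fun S => t ⊆ S)).card)
      = (u.card - t.card).choose k := by
  rw [← Finset.card_sdiff_of_subset ht, ← Finset.card_powersetCard k (u \ t)]
  apply Finset.card_nbij' (fun S => S \ t) (fun T => T ∪ t)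
  · intro S hS
    simp only [Finset.mem_coe, Finset.mem_filter, Finset.mem_powersetCard] at hS
    obtain ⟨⟨hSu, hScard⟩, htS⟩ := hS
    rw [Finset.mem_coe, Finset.mem_powersetCard]
    constructor
    · exact Finset.sdiff_subset_sdiff hSu le_rfl
    · rw [Finset.card_sdiff_of_subset htS, hScard]; omega
  · intro T hT
    rw [Finset.mem_coe, Finset.mem_powersetCard] at hT
    obtain ⟨hTu, hTcard⟩ := hT
    have hdisj : Disjoint T t := Finset.disjoint_of_subset_left hTu (Finset.sdiff_disjoint)
    simp only [Finset.mem_coe, Finset.mem_filter, Finset.mem_powersetCard]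
    refine ⟨⟨?_, ?_⟩, Finset.subset_union_right⟩
    · exact Finset.union_subset (hTu.trans (Finset.sdiff_subset)) ht
    · rw [Finset.card_union_of_disjoint hdisj, hTcard]
  · intro S hS
    simp only [Finset.mem_coe, Finset.mem_filter] at hS
    exact Finset.sdiff_union_of_subset hS.2
  · intro T hT
    rw [Finset.mem_coe, Finset.mem_powersetCard] at hT
    have hdisj : Disjoint T t := Finset.disjoint_of_subset_left hT.1 (Finset.sdiff_disjoint)
    exact Finset.union_sdiff_cancel_right hdisj

/-- swap a sum over subsets with the inner sum over elements -/
lemma swap_sum {α : Type*} [DecidableEq α] (u : Finset α) (k : ℕ) (g : α → ℝ) :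
    ∑ t ∈ u.powersetCard k, ∑ i ∈ t, g i
      = ∑ i ∈ u, (((u.powersetCard k).filter (fun t => i ∈ t)).card : ℝ) * g i := by
  calc ∑ t ∈ u.powersetCard k, ∑ i ∈ t, g i
      = ∑ t ∈ u.powersetCard k, ∑ i ∈ u, if i ∈ t then g i else 0 := by
        apply Finset.sum_congr rfl
        intro t ht
        rw [Finset.mem_powersetCard] at ht
        rw [Finset.sum_ite_mem, Finset.inter_eq_right.mpr ht.1]
    _ = ∑ i ∈ u, ∑ t ∈ u.powersetCard k, if i ∈ t then g i else 0 := Finset.sum_comm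
    _ = _ := by
        apply Finset.sum_congr rfl
        intro i _
        rw [← Finset.sum_filter, Finset.sum_const, nsmul_eq_mul]

lemma swap_sum2 {α : Type*} [DecidableEq α] (u : Finset α) (k : ℕ) (h : α → α → ℝ) :
    ∑ t ∈ u.powersetCard k, ∑ i ∈ t, ∑ j ∈ t, h i j
      = ∑ i ∈ u, ∑ j ∈ u,
          (((u.powersetCard k).filter (fun t => i ∈ t ∧ j ∈ t)).card : ℝ) * h i j := by
  calc ∑ t ∈ u.powersetCard k, ∑ i ∈ t, ∑ j ∈ t, h i j
      = ∑ t ∈ u.powersetCard k, ∑ i ∈ u, ∑ j ∈ u,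
          if i ∈ t ∧ j ∈ t then h i j else 0 := by
        apply Finset.sum_congr rfl
        intro t ht
        rw [Finset.mem_powersetCard] at ht
        symm
        calc ∑ i ∈ u, ∑ j ∈ u, (if i ∈ t ∧ j ∈ t then h i j else 0)
            = ∑ i ∈ u, (if i ∈ t then ∑ j ∈ t, h i j else 0) := by
              apply Finset.sum_congr rfl
              intro i _
              by_cases hi : i ∈ t
              · simp only [hi, true_and, if_true]
                rw [Finset.sum_ite_mem, Finset.inter_eq_right.mpr ht.1]
              · simp [hi]
          _ = ∑ i ∈ t, ∑ j ∈ t, h i j := by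
              rw [Finset.sum_ite_mem, Finset.inter_eq_right.mpr ht.1]
    _ = ∑ i ∈ u, ∑ j ∈ u, ∑ t ∈ u.powersetCard k,
          if i ∈ t ∧ j ∈ t then h i j else 0 := by
        rw [Finset.sum_comm]
        exact Finset.sum_congr rfl fun i _ => Finset.sum_comm
    _ = _ := by
        apply Finset.sum_congr rfl
        intro i _
        apply Finset.sum_congr rfl
        intro j _
        rw [← Finset.sum_filter, Finset.sum_const, nsmul_eq_mul]

lemma sqrt_nat_tendsto : Tendsto (fun m : ℕ => Real.sqrt m) atTop atTop := by
  apply tendsto_atTop_atTop.2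
  intro b
  refine ⟨⌈b^2⌉₊, fun m hm => ?_⟩
  have h : (b^2 : ℝ) ≤ m := le_trans (Nat.le_ceil _) (Nat.cast_le.2 hm)
  calc b ≤ |b| := le_abs_self b
  _ = Real.sqrt (b^2) := (Real.sqrt_sq_eq_abs b).symm
  _ ≤ Real.sqrt m := Real.sqrt_le_sqrt h

/-- per-term second order limit -/
lemma term_limit (s : ℝ) :
    Tendsto (fun m : ℕ => (m:ℝ) * (Real.exp (s / Real.sqrt m) - 1 - s / Real.sqrt m))
      atTop (𝓝 (s^2/2)) := by
  rw [← tendsto_sub_nhds_zero_iff]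
  apply squeeze_zero_norm' (a := fun m : ℕ => |s|^3 / Real.sqrt m)
  · rw [eventually_atTop]
    refine ⟨max 1 ⌈s^2⌉₊, fun m hm => ?_⟩
    have hm1 : 1 ≤ m := le_trans (le_max_left _ _) hm
    have hms : (s^2 : ℝ) ≤ m := le_trans (Nat.le_ceil _)
      (Nat.cast_le.2 (le_trans (le_max_right _ _) hm))
    have hm0 : (0:ℝ) < m := by positivity
    have hsqm : (0:ℝ) < Real.sqrt m := Real.sqrt_pos.2 hm0
    have hsq : Real.sqrt m ^ 2 = (m:ℝ) := Real.sq_sqrt hm0.le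
    set x := s / Real.sqrt m with hx
    have habs : |x| ≤ 1 := by
      rw [hx, abs_div, abs_of_pos hsqm, div_le_one hsqm]
      calc |s| = Real.sqrt (s^2) := (Real.sqrt_sq_eq_abs s).symm
      _ ≤ Real.sqrt m := Real.sqrt_le_sqrt hms
    have hbound := Real.exp_bound habs (by norm_num : 0 < 3)
    have hsum : ∑ i ∈ Finset.range 3, x ^ i / (Nat.factorial i) = 1 + x + x^2/2 := by
      simp [Finset.sum_range_succ, Nat.factorial]
    rw [hsum] at hbound
    have hmx2 : (m:ℝ) * (x^2/2) = s^2/2 := by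
      rw [hx, div_pow, hsq]
      field_simp
    have heq : (m:ℝ) * (Real.exp x - 1 - x) - s^2/2
        = (m:ℝ) * (Real.exp x - (1 + x + x^2/2)) := by
      rw [← hmx2]; ring
    rw [heq, norm_mul, Real.norm_eq_abs, Real.norm_eq_abs, abs_of_pos hm0]
    calc (m:ℝ) * |Real.exp x - (1 + x + x^2/2)|
        ≤ (m:ℝ) * (|x|^3 * ((3:ℕ).succ / ((3:ℕ).factorial * 3))) :=
          mul_le_mul_of_nonneg_left hbound hm0.le
      _ = (m:ℝ) * |x|^3 * (2/9) := by norm_num [Nat.factorial]; ring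
      _ ≤ (m:ℝ) * |x|^3 * 1 := by
          apply mul_le_mul_of_nonneg_left (by norm_num)
          positivity
      _ = |s|^3 / Real.sqrt m := by
          rw [mul_one, hx, abs_div, abs_of_pos hsqm, div_pow]
          rw [show Real.sqrt m ^ 3 = Real.sqrt m ^ 2 * Real.sqrt m by ring, hsq]
          field_simp
  · have : Tendsto (fun m : ℕ => (Real.sqrt m)⁻¹) atTop (𝓝 0) :=
      sqrt_nat_tendsto.inv_tendsto_atTop
    have := this.const_mul (|s|^3)
    simpa [div_eq_mul_inv] using this

/-- if `n * (f n - 1) → c` then `f n ^ n → exp c` -/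
lemma cpow_lim {f : ℕ → ℂ} {c : ℂ}
    (h : Tendsto (fun n : ℕ => (n:ℂ) * (f n - 1)) atTop (𝓝 c)) :
    Tendsto (fun n : ℕ => f n ^ n) atTop (𝓝 (Complex.exp c)) := by
  have hinv : Tendsto (fun n : ℕ => ((n:ℂ))⁻¹) atTop (𝓝 0) :=
    tendsto_inv_atTop_nhds_zero_nat (𝕜 := ℂ)
  have h0 : Tendsto (fun n => f n - 1) atTop (𝓝 0) := by
    have hmul := hinv.mul h
    rw [zero_mul] at hmul
    apply hmul.congr'
    filter_upwards [eventually_ge_atTop 1] with n hn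
    have hn0 : (n:ℂ) ≠ 0 := Nat.cast_ne_zero.2 (by omega)
    field_simp
  have hsmall : ∀ᶠ n in atTop, ‖f n - 1‖ < 1/2 := by
    have := h0.norm
    rw [norm_zero] at this
    exact this.eventually_lt_const (by norm_num)
  have hdiff : Tendsto (fun n : ℕ => (n:ℂ) * (Complex.log (f n)) - (n:ℂ)*(f n - 1))
      atTop (𝓝 0) := by
    apply squeeze_zero_norm' (a := fun n : ℕ => ‖(n:ℂ)*(f n - 1)‖ * ‖f n - 1‖)
    · filter_upwards [hsmall] with n hn
      set w := f n - 1 with hw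
      have hf : f n = 1 + w := by rw [hw]; ring
      have hlog : ‖Complex.log (f n) - w‖ ≤ ‖w‖^2 * (1 - ‖w‖)⁻¹ / 2 := by
        rw [hf]
        exact Complex.norm_log_one_add_sub_self_le (by linarith)
      have hb : ‖w‖^2 * (1 - ‖w‖)⁻¹ / 2 ≤ ‖w‖^2 := by
        have h1 : (1 - ‖w‖)⁻¹ ≤ 2 := by
          rw [inv_le_comm₀ (by linarith) (by norm_num)]
          linarith
        have h2 : (0:ℝ) ≤ ‖w‖^2 := by positivity
        nlinarith
      calc ‖(n:ℂ) * Complex.log (f n) - (n:ℂ)*w‖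
          = ‖(n:ℂ)‖ * ‖Complex.log (f n) - w‖ := by rw [← norm_mul]; ring_nf
        _ ≤ ‖(n:ℂ)‖ * ‖w‖^2 := by
            apply mul_le_mul_of_nonneg_left (le_trans hlog hb) (norm_nonneg _)
        _ = ‖(n:ℂ)*w‖ * ‖w‖ := by rw [norm_mul]; ring
    · have hn0 : Tendsto (fun n : ℕ => ‖f n - 1‖) atTop (𝓝 0) := by simpa using h0.norm
      have := (h.norm).mul hn0
      simpa using this
  have hlog : Tendsto (fun n : ℕ => (n:ℂ) * Complex.log (f n)) atTop (𝓝 c) := by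
    have := hdiff.add h
    rw [zero_add] at this
    apply this.congr
    intro n; ring
  have := (Complex.continuous_exp.tendsto c).comp hlog
  apply this.congr'
  filter_upwards [hsmall] with n hn
  have hne : f n ≠ 0 := by
    intro hfn
    rw [hfn] at hn
    simp at hn
    linarith
  simp only [Function.comp]
  rw [Complex.exp_nat_mul, Complex.exp_log hne]

end AuxLemmas

section CombLemmas
open Topology

lemma psum_zero (d : ℕ) (θ : Fin d → ℝ) (hmean : ∑ k, θ k = 0)
    (k : ℕ) :
    ∑ t ∈ (univ : Finset (Fin d)).powersetCard k, ∑ i ∈ t, θ i = 0 := by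
  cases k with
  | zero => simp [Finset.powersetCard_zero]
  | succ k' =>
    rw [swap_sum]
    have hN : ∀ i : Fin d,
        (((univ : Finset (Fin d)).powersetCard (k'+1)).filter (fun t => i ∈ t)).card
          = (d-1).choose k' := by
      intro i
      have h := card_filter_subset_powersetCard (univ : Finset (Fin d)) {i} (by simp) k'
      simp only [Finset.card_singleton, Finset.card_univ, Fintype.card_fin] at h
      rw [← h]
      apply congrArg
      apply Finset.filter_congr
      intro t _
      simp [Finset.singleton_subset_iff]
    calc ∑ i : Fin d, ((((univ : Finset (Fin d)).powersetCard (k'+1)).filter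
            (fun t => i ∈ t)).card : ℝ) * θ i
        = ∑ i : Fin d, ((d-1).choose k' : ℝ) * θ i := by
          apply Finset.sum_congr rfl; intro i _; rw [hN i]
      _ = ((d-1).choose k' : ℝ) * ∑ i, θ i := by rw [Finset.mul_sum]
      _ = 0 := by rw [hmean, mul_zero]

lemma psum_sq (d : ℕ) (hd : 2 ≤ d) (θ : Fin d → ℝ) (hmean : ∑ k, θ k = 0)
    (k' : ℕ) (hkd : k' + 1 ≤ d) :
    ∑ t ∈ (univ : Finset (Fin d)).powersetCard (k'+1), (∑ i ∈ t, θ i)^2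
      = ((d-2).choose k' : ℝ) * ∑ i, θ i ^ 2 := by
  have hsq : ∀ t : Finset (Fin d), (∑ i ∈ t, θ i)^2 = ∑ i ∈ t, ∑ j ∈ t, θ i * θ j := by
    intro t; rw [sq, Finset.sum_mul_sum]
  rw [Finset.sum_congr rfl (fun t _ => hsq t), swap_sum2]
  set c2 : ℝ := if 1 ≤ k' then (((d-2).choose (k'-1) : ℕ) : ℝ) else 0 with hc2
  have hNdiag : ∀ i : Fin d,
      ((((univ : Finset (Fin d)).powersetCard (k'+1)).filter
        (fun t => i ∈ t ∧ i ∈ t)).card : ℝ) = ((d-1).choose k' : ℝ) := by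
    intro i
    have h := card_filter_subset_powersetCard (univ : Finset (Fin d)) {i} (by simp) k'
    simp only [Finset.card_singleton, Finset.card_univ, Fintype.card_fin] at h
    rw [← h]
    congr 1
    apply congrArg
    apply Finset.filter_congr
    intro t _
    simp [Finset.singleton_subset_iff]
  have hNoff : ∀ i j : Fin d, i ≠ j →
      ((((univ : Finset (Fin d)).powersetCard (k'+1)).filter
        (fun t => i ∈ t ∧ j ∈ t)).card : ℝ) = c2 := by
    intro i j hij
    cases k' with
    | zero =>
      have hempty : (((univ : Finset (Fin d)).powersetCard 1).filter
          (fun t => i ∈ t ∧ j ∈ t)) = ∅ := by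
        rw [Finset.eq_empty_iff_forall_notMem]
        intro t ht
        simp only [Finset.mem_filter, Finset.mem_powersetCard] at ht
        obtain ⟨⟨_, hcard⟩, hi, hj⟩ := ht
        have hsub : ({i, j} : Finset (Fin d)) ⊆ t := by
          intro x hx
          simp only [Finset.mem_insert, Finset.mem_singleton] at hx
          rcases hx with rfl | rfl <;> assumption
        have := Finset.card_le_card hsub
        rw [Finset.card_pair hij, hcard] at this
        omega
      rw [hempty]
      simp [hc2]
    | succ k'' =>
      have hcardij : ({i, j} : Finset (Fin d)).card = 2 := Finset.card_pair hij
      have h := card_filter_subset_powersetCard (univ : Finset (Fin d)) {i, j} (by simp) k''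
      rw [hcardij, Finset.card_univ, Fintype.card_fin] at h
      have heq : (((univ : Finset (Fin d)).powersetCard (k''+1+1)).filter
          (fun t => i ∈ t ∧ j ∈ t))
          = (((univ : Finset (Fin d)).powersetCard (k''+2)).filter
            (fun t => ({i,j} : Finset (Fin d)) ⊆ t)) := by
        apply Finset.filter_congr
        intro t _
        simp [Finset.insert_subset_iff, Finset.singleton_subset_iff]
      rw [heq, h, hc2]
      simp
  have herase : ∀ i : Fin d, ∑ j ∈ univ.erase i, θ j = -θ i := by
    intro i
    have := Finset.sum_erase_add univ θ (Finset.mem_univ i)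
    linarith [this.symm ▸ hmean]
  have hstep : ∀ i : Fin d,
      (∑ j : Fin d, ((((univ : Finset (Fin d)).powersetCard (k'+1)).filter
        (fun t => i ∈ t ∧ j ∈ t)).card : ℝ) * (θ i * θ j))
      = ((d-1).choose k' : ℝ) * θ i^2 - c2 * θ i^2 := by
    intro i
    rw [← Finset.sum_erase_add _ _ (Finset.mem_univ i)]
    have h1 : ∑ j ∈ univ.erase i, ((((univ : Finset (Fin d)).powersetCard (k'+1)).filter
        (fun t => i ∈ t ∧ j ∈ t)).card : ℝ) * (θ i * θ j)
        = c2 * θ i * ∑ j ∈ univ.erase i, θ j := by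
      rw [Finset.mul_sum]
      apply Finset.sum_congr rfl
      intro j hj
      rw [hNoff i j (Finset.ne_of_mem_erase hj).symm]
      ring
    rw [h1, herase i, hNdiag i]
    ring
  rw [Finset.sum_congr rfl (fun i _ => hstep i)]
  rw [Finset.sum_sub_distrib, ← Finset.mul_sum, ← Finset.mul_sum, ← sub_mul]
  congr 1
  cases k' with
  | zero =>
    simp [hc2]
  | succ k'' =>
    have hd1 : d - 1 = (d - 2) + 1 := by omega
    rw [hd1, Nat.choose_succ_succ, hc2]
    simp only [Nat.le_add_left 1 k'', if_pos, Nat.add_sub_cancel]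
    push_cast
    ring

lemma choose_id (d : ℕ) (hd : 2 ≤ d) (k' : ℕ) (hkd : k' + 1 ≤ d) :
    d*(d-1)*((d-2).choose k') = (k'+1)*(d-(k'+1))*(d.choose (k'+1)) := by
  obtain ⟨e, rfl⟩ : ∃ e, d = e + 2 := ⟨d - 2, by omega⟩
  have hke : k' ≤ e + 1 := by omega
  have h1 := Nat.add_one_mul_choose_eq (e+1) k'
  have h3 : e + 2 - 1 = e + 1 := by omega
  have h4 : e + 2 - 2 = e := by omega
  rw [h3, h4]
  have h2' := Nat.choose_mul_succ_eq e k'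
  calc (e+2)*(e+1)*(e.choose k') = (e+2)*((e.choose k')*(e+1)) := by ring
    _ = (e+2)*((e+1).choose k' * (e+1-k')) := by rw [h2']
    _ = ((e+2)*(e+1).choose k') * (e+1-k') := by ring
    _ = ((e+2).choose (k'+1)*(k'+1)) * (e+1-k') := by
        rw [show (e+2) = Nat.succ (e+1) from rfl, h1]
    _ = (k'+1)*((e+2)-(k'+1))*((e+2).choose (k'+1)) := by
        rw [show (e+2)-(k'+1) = e+1-k' by omega]; ring

end CombLemmas

section PolyLemmas
open Topology

lemma sum_form_coeff (d : ℕ) (c : ℕ → ℂ) {k : ℕ} (hk : k ≤ d) :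
    (∑ i ∈ Finset.range (d+1), Polynomial.C (c i) * Polynomial.X ^ (d - i)).coeff (d - k)
      = c k := by
  rw [Polynomial.finset_sum_coeff]
  simp only [Polynomial.coeff_C_mul, Polynomial.coeff_X_pow]
  rw [Finset.sum_eq_single k]
  · simp
  · intro i hi hik
    rw [Finset.mem_range] at hi
    rw [if_neg (by omega), mul_zero]
  · intro hk'
    exact absurd (Finset.mem_range.2 (by omega)) hk'

lemma sum_form_coeff_high (d : ℕ) (c : ℕ → ℂ) {j : ℕ} (hj : d < j) :
    (∑ i ∈ Finset.range (d+1), Polynomial.C (c i) * Polynomial.X ^ (d - i)).coeff j = 0 := by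
  rw [Polynomial.finset_sum_coeff]
  apply Finset.sum_eq_zero
  intro i hi
  simp only [Polynomial.coeff_C_mul, Polynomial.coeff_X_pow]
  rw [if_neg (by omega), mul_zero]

lemma ffpow_eq (d : ℕ) (p : Polynomial ℂ) (m : ℕ) :
    ffpow d p m = ∑ i ∈ Finset.range (d+1),
      Polynomial.C ((-1)^i * (d.choose i : ℂ) * (atilde d p i)^m) * Polynomial.X^(d-i) := by
  induction m with
  | zero =>
    show (Polynomial.X - 1 : Polynomial ℂ)^d = _
    have h1 : (Polynomial.X - 1 : Polynomial ℂ) = Polynomial.X + Polynomial.C (-1) := by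
      rw [map_neg, Polynomial.C_1, sub_eq_add_neg]
    rw [h1, add_pow]
    rw [← Finset.sum_range_reflect]
    apply Finset.sum_congr rfl
    intro i hi
    rw [Finset.mem_range] at hi
    have hid : i ≤ d := by omega
    have h2 : d + 1 - 1 - i = d - i := by omega
    have h3 : d - (d - i) = i := by omega
    rw [h2, h3, Nat.choose_symm hid, pow_zero, mul_one]
    rw [← Polynomial.C_pow]
    simp only [map_mul, Polynomial.C_eq_natCast]
    ring
  | succ m ih =>
    show ffmul d (ffpow d p m) p = _
    rw [ffmul]
    apply Finset.sum_congr rfl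
    intro i hi
    rw [Finset.mem_range] at hi
    have hid : i ≤ d := by omega
    have hat : atilde d (ffpow d p m) i = (atilde d p i)^m := by
      rw [atilde, ih, sum_form_coeff d _ hid]
      have hC : ((d.choose i : ℂ)) ≠ 0 :=
        Nat.cast_ne_zero.2 (Nat.choose_pos hid).ne'
      have hneg : ((-1:ℂ))^i * ((-1:ℂ))^i = 1 := by
        rw [← pow_add]
        exact Even.neg_one_pow ⟨i, by ring⟩
      have hre : (-1:ℂ)^i * ((d.choose i:ℂ))⁻¹ * ((-1)^i * (d.choose i:ℂ) * atilde d p i ^ m)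
          = ((-1:ℂ)^i*(-1:ℂ)^i) * (((d.choose i:ℂ))⁻¹ * (d.choose i:ℂ)) * atilde d p i^m := by
        ring
      rw [hre, hneg, inv_mul_cancel₀ hC, one_mul, one_mul]
    rw [hat]
    congr 1
    rw [pow_succ]
    ring

lemma vieta_atilde (d : ℕ) (θ : Fin d → ℝ) (m : ℕ) (k : ℕ) (hk : k ≤ d) :
    atilde d (∏ i : Fin d, (Polynomial.X -
        Polynomial.C ((Real.exp (θ i / Real.sqrt (m : ℝ)) : ℝ) : ℂ))) k
      = ((((d.choose k : ℝ))⁻¹ * ∑ t ∈ (univ : Finset (Fin d)).powersetCard k,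
          Real.exp ((∑ i ∈ t, θ i) / Real.sqrt (m : ℝ)) : ℝ) : ℂ) := by
  set c : Fin d → ℂ := fun i => ((Real.exp (θ i / Real.sqrt (m : ℝ)) : ℝ) : ℂ) with hc
  have hprod : (∏ i : Fin d, (Polynomial.X - Polynomial.C (c i)))
      = (((univ : Finset (Fin d)).val.map c).map
          (fun r => Polynomial.X - Polynomial.C r)).prod := by
    rw [Multiset.map_map]
    rfl
  have hcard : Multiset.card (((univ : Finset (Fin d)).val.map c)) = d := by
    rw [Multiset.card_map]
    exact Finset.card_univ.trans (Fintype.card_fin d)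
  have hcoeff : (∏ i : Fin d, (Polynomial.X - Polynomial.C (c i))).coeff (d - k)
      = (-1)^k * ∑ t ∈ (univ : Finset (Fin d)).powersetCard k, ∏ i ∈ t, c i := by
    rw [hprod, Multiset.prod_X_sub_C_coeff _ (by rw [hcard]; omega)]
    rw [hcard, Nat.sub_sub_self hk, Finset.esymm_map_val]
  rw [atilde, hcoeff]
  have hneg : ((-1:ℂ))^k * ((-1:ℂ))^k = 1 := by
    rw [← pow_add]
    exact Even.neg_one_pow ⟨k, by ring⟩
  have hterm : ∀ t ∈ (univ : Finset (Fin d)).powersetCard k,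
      ∏ i ∈ t, c i = ((Real.exp ((∑ i ∈ t, θ i) / Real.sqrt (m : ℝ)) : ℝ) : ℂ) := by
    intro t _
    rw [hc]
    push_cast
    rw [← Complex.exp_sum]
    congr 1
    rw [Finset.sum_div]
  rw [Finset.sum_congr rfl hterm]
  push_cast
  have hre : ∀ S : ℂ, (-1:ℂ)^k * ((d.choose k:ℂ))⁻¹ * ((-1)^k * S)
      = ((-1:ℂ)^k*(-1:ℂ)^k) * (((d.choose k:ℂ))⁻¹ * S) := fun S => by ring
  rw [hre, hneg, one_mul]

end PolyLemmas

open Topology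

theorem statement15 (d : ℕ) (hd : 2 ≤ d) (θ : Fin d → ℝ) (σ2 : ℝ)
    (hmean : ∑ k, θ k = 0) (hvar : (∑ k, θ k ^ 2) / (d : ℝ) = σ2)
    (p : ℕ → Polynomial ℂ)
    (hp : ∀ m, p m = ∏ k, (Polynomial.X -
      Polynomial.C ((Real.exp (θ k / Real.sqrt (m : ℝ)) : ℝ) : ℂ))) :
    (∀ k ≤ d, Tendsto (fun m => atilde d (p m) k ^ m) atTop
        (nhds (((Real.exp ((k : ℝ) * ((d : ℝ) - (k : ℝ)) * σ2 /
          (2 * ((d : ℝ) - 1))) : ℝ) : ℂ)))) ∧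
    (∀ j, Tendsto (fun m => (ffpow d (p m) m).coeff j) atTop
        (nhds ((Idpoly d ((d : ℝ) * σ2 / ((d : ℝ) - 1))).coeff j))) := by
  have hdR : (2:ℝ) ≤ (d:ℝ) := by exact_mod_cast hd
  have hdne : (d:ℝ) ≠ 0 := by linarith
  have hd1 : ((d:ℝ) - 1) ≠ 0 := by linarith
  have part1 : ∀ k ≤ d, Tendsto (fun m => atilde d (p m) k ^ m) atTop
      (𝓝 (((Real.exp ((k : ℝ) * ((d : ℝ) - (k : ℝ)) * σ2 /
        (2 * ((d : ℝ) - 1))) : ℝ) : ℂ))) := by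
    intro k hk
    have hC : ((d.choose k : ℝ)) ≠ 0 := Nat.cast_ne_zero.2 (Nat.choose_pos hk).ne'
    set L : ℝ := (k:ℝ) * ((d:ℝ) - (k:ℝ)) * σ2 / (2 * ((d:ℝ) - 1)) with hL
    set S : Finset (Finset (Fin d)) := (univ : Finset (Fin d)).powersetCard k with hS
    have hcardS : (S.card : ℝ) = (d.choose k : ℝ) := by
      rw [hS, Finset.card_powersetCard, Finset.card_univ, Fintype.card_fin]
    have hsum0 : ∑ t ∈ S, ∑ i ∈ t, θ i = 0 := psum_zero d θ hmean k
    -- pointwise rewrite of m * (b m - 1)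
    have hpt : ∀ m : ℕ,
        ((d.choose k:ℝ))⁻¹ * ∑ t ∈ S, (m:ℝ) *
          (Real.exp ((∑ i ∈ t, θ i) / Real.sqrt m) - 1 - (∑ i ∈ t, θ i) / Real.sqrt m)
        = (m:ℝ) * (((d.choose k:ℝ))⁻¹ *
            (∑ t ∈ S, Real.exp ((∑ i ∈ t, θ i) / Real.sqrt m)) - 1) := by
      intro m
      have h1 : ∑ t ∈ S, ((∑ i ∈ t, θ i) / Real.sqrt m) = 0 := by
        rw [← Finset.sum_div, hsum0, zero_div]
      have h2 : ∑ t ∈ S, (Real.exp ((∑ i ∈ t, θ i) / Real.sqrt m) - 1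
            - (∑ i ∈ t, θ i) / Real.sqrt m)
          = (∑ t ∈ S, Real.exp ((∑ i ∈ t, θ i) / Real.sqrt m)) - (d.choose k : ℝ) := by
        rw [Finset.sum_sub_distrib, Finset.sum_sub_distrib, h1, sub_zero,
          Finset.sum_const, nsmul_eq_mul, mul_one, hcardS]
      rw [← Finset.mul_sum, h2]
      field_simp
    -- limit of the sum
    have hterm : Tendsto (fun m : ℕ => ∑ t ∈ S, (m:ℝ) *
        (Real.exp ((∑ i ∈ t, θ i) / Real.sqrt m) - 1 - (∑ i ∈ t, θ i) / Real.sqrt m))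
        atTop (𝓝 (∑ t ∈ S, (∑ i ∈ t, θ i)^2/2)) :=
      tendsto_finset_sum _ (fun t _ => term_limit (∑ i ∈ t, θ i))
    -- value identification
    have hLval : ((d.choose k:ℝ))⁻¹ * (∑ t ∈ S, (∑ i ∈ t, θ i)^2/2) = L := by
      rw [← Finset.sum_div]
      cases k with
      | zero =>
        rw [hL, hS]
        simp [Finset.powersetCard_zero]
      | succ k' =>
        rw [hS, psum_sq d hd θ hmean k' hk]
        have hcast := congrArg (fun n : ℕ => (n:ℝ)) (choose_id d hd k' hk)
        push_cast [Nat.cast_sub (show 1 ≤ d by omega), Nat.cast_sub hk] at hcast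
        rw [hL, ← hvar]
        push_cast
        field_simp
        linear_combination (∑ i, θ i ^ 2) * hcast
    have hmb : Tendsto (fun m : ℕ => (m:ℝ) * (((d.choose k:ℝ))⁻¹ *
        (∑ t ∈ S, Real.exp ((∑ i ∈ t, θ i) / Real.sqrt m)) - 1)) atTop (𝓝 L) := by
      have h := hterm.const_mul ((d.choose k:ℝ))⁻¹
      rw [hLval] at h
      exact h.congr hpt
    have hcb : Tendsto (fun m : ℕ => (m:ℂ) * (atilde d (p m) k - 1)) atTop (𝓝 (L:ℂ)) := by
      have h := (Complex.continuous_ofReal.tendsto L).comp hmb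
      apply h.congr
      intro m
      simp only [Function.comp]
      rw [hp m, vieta_atilde d θ m k hk]
      push_cast
      ring
    have hfin := cpow_lim hcb
    rw [← Complex.ofReal_exp] at hfin
    exact hfin
  refine ⟨part1, ?_⟩
  intro j
  rcases le_or_gt j d with hj | hj
  · set k := d - j with hkj
    have hk : k ≤ d := Nat.sub_le d j
    have hjk : j = d - k := by omega
    have hcoeff : ∀ m : ℕ, (ffpow d (p m) m).coeff j
        = ((-1:ℂ))^k * (d.choose k:ℂ) * (atilde d (p m) k)^m := by
      intro m
      rw [hjk, ffpow_eq, sum_form_coeff d _ hk]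
    have hIco : (Idpoly d ((d:ℝ)*σ2/((d:ℝ)-1))).coeff j
        = ((-1:ℂ))^k * (d.choose k:ℂ) *
          ((Real.exp ((k:ℝ)*((d:ℝ)-(k:ℝ))*σ2/(2*((d:ℝ)-1))) : ℝ) : ℂ) := by
      rw [hjk, Idpoly, sum_form_coeff d _ hk]
      congr 3
      field_simp
    rw [hIco]
    have h := (part1 k hk).const_mul (((-1:ℂ))^k * (d.choose k:ℂ))
    exact h.congr (fun m => (hcoeff m).symm)
  · have h1 : ∀ m : ℕ, (ffpow d (p m) m).coeff j = 0 := by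
      intro m
      rw [ffpow_eq]
      exact sum_form_coeff_high d _ hj
    have h2 : (Idpoly d ((d:ℝ)*σ2/((d:ℝ)-1))).coeff j = 0 := by
      rw [Idpoly]
      exact sum_form_coeff_high d _ hj
    rw [h2]
    exact tendsto_const_nhds.congr (fun m => (h1 m).symm)
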